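/- Assume 𝔭 = 𝔠, and let X(𝔠) be a twisted sum in a short exact sequence 0 → c₀ → X(𝔠) → c₀(𝔠) → 0 constructed via a countable discrete extension L = M₁(𝔸(𝔠)) ∪ ω in which ω is dense in L and each measure σ_ξ = (1/2)(δ_{x_ξ} − δ_{y_ξ}) satisfies: for every ξ there is f_ξ ∈ X(𝔠) with q(f_ξ) = e_ξ and f_ξ(σ_ξ) = 1/2. Then the quotient map q : X(𝔠) → c₀(𝔠) is c₀(ℵ₁)-singular: there is no isomorphic embedding j : c₀(ℵ₁) → c₀(𝔠) admitting a bounded lifting E : c₀(ℵ₁) → X(𝔠) with q ∘ E = j. -/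

import Mathlib

/-- A family of subsets of `ω` has the strong finite intersection property. -/
def HasSFIP (F : Set (Set ℕ)) : Prop :=
  ∀ G : Finset (Set ℕ), ↑G ⊆ F → (⋂₀ (↑G : Set (Set ℕ)) : Set ℕ).Infinite

/-- A family of subsets of `ω` has an infinite pseudo-intersection. -/
def HasPseudoIntersection (F : Set (Set ℕ)) : Prop :=
  ∃ A : Set ℕ, A.Infinite ∧ ∀ B ∈ F, (A \ B).Finite

/-- The pseudo-intersection number `𝔭`. -/
noncomputable def pseudoIntersectionNumber : Cardinal :=
  sInf {c : Cardinal | ∃ F : Set (Set ℕ),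
    HasSFIP F ∧ ¬ HasPseudoIntersection F ∧ Cardinal.mk F = c}

open scoped Classical

open Filter in
/-- The canonical unit vector `e_ξ` in `c₀(ι)` over a discrete space. -/
noncomputable def c0single (ι : Type) [TopologicalSpace ι] [DiscreteTopology ι] (ξ : ι) :
    ZeroAtInftyContinuousMap ι ℝ where
  toFun η := if η = ξ then (1 : ℝ) else 0
  continuous_toFun := continuous_of_discreteTopology
  zero_at_infty' := by
    refine Filter.Tendsto.congr' ?_ (tendsto_const_nhds (x := (0 : ℝ)))
    filter_upwards [(isCompact_singleton (x := ξ)).compl_mem_cocompact] with η hη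
    have : η ≠ ξ := by simpa using hη
    simp [this]

theorem c0single_apply (ι : Type) [TopologicalSpace ι] [DiscreteTopology ι] (ξ η : ι) :
    c0single ι ξ η = if η = ξ then (1 : ℝ) else 0 := rfl

theorem c0_apply_le_norm {ι : Type} [TopologicalSpace ι]
    (f : ZeroAtInftyContinuousMap ι ℝ) (x : ι) : |f x| ≤ ‖f‖ := by
  rw [← ZeroAtInftyContinuousMap.norm_toBCF_eq_norm, ← Real.norm_eq_abs]
  exact f.toBCF.norm_coe_le_norm x

theorem c0_sum_apply {ι γ : Type} [TopologicalSpace ι] (S : Finset γ)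
    (f : γ → ZeroAtInftyContinuousMap ι ℝ) (x : ι) :
    (∑ k ∈ S, f k) x = ∑ k ∈ S, f k x := by
  classical
  induction S using Finset.induction_on with
  | empty => simp
  | insert _ _ h ih => simp [Finset.sum_insert h, ZeroAtInftyContinuousMap.add_apply, ih]



set_option maxHeartbeats 1000000 in
/-- assume `𝔭 = 𝔠`.  Let `X(𝔠)` be the twisted sum in
`0 → c₀ → X(𝔠) → c₀(𝔠) → 0` arising from a countable discrete extension
`L = M₁(𝔸(𝔠)) ∪ ω` in which `ω` is dense in `L`, and suppose that for each `ξ` there is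
`f_ξ ∈ X(𝔠)` with `q f_ξ = e_ξ` and `f_ξ(σ_ξ) = 1/2`.  Then the quotient map
`q : X(𝔠) → c₀(𝔠)` is `c₀(ℵ₁)`-singular: no isomorphic embedding
`j : c₀(ℵ₁) → c₀(𝔠)` admits a bounded lifting `E : c₀(ℵ₁) → X(𝔠)` with `q ∘ E = j`. -/
theorem stmt16
    (hp : pseudoIntersectionNumber = Cardinal.continuum)
    (κ : Type) [TopologicalSpace κ] [DiscreteTopology κ]
    (hκ : Cardinal.mk κ = Cardinal.continuum)
    (ι₁ : Type) [TopologicalSpace ι₁] [DiscreteTopology ι₁]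
    (hι₁ : Cardinal.mk ι₁ = Cardinal.aleph 1)
    (L : Type) [TopologicalSpace L] [CompactSpace L] [T2Space L]
    (d : ℕ → L) (hdense : DenseRange d)
    (σ : κ → L)
    (Xs : Submodule ℝ C(L, ℝ)) (hXc : IsClosed (Xs : Set C(L, ℝ)))
    (q : ↥Xs →L[ℝ] ZeroAtInftyContinuousMap κ ℝ)
    (hqsurj : Function.Surjective q)
    (hlift : ∀ ξ : κ, ∃ f : ↥Xs,
      (∀ η : κ, q f η = if η = ξ then (1 : ℝ) else 0) ∧ (f : C(L, ℝ)) (σ ξ) = 1 / 2) :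
    ¬ ∃ (j : ZeroAtInftyContinuousMap ι₁ ℝ →L[ℝ] ZeroAtInftyContinuousMap κ ℝ)
        (E : ZeroAtInftyContinuousMap ι₁ ℝ →L[ℝ] ↥Xs),
        (∃ c > (0 : ℝ), ∀ g : ZeroAtInftyContinuousMap ι₁ ℝ, c * ‖g‖ ≤ ‖j g‖) ∧
        q.comp E = j := by
  rintro ⟨j, E, ⟨c, hc, hjc⟩, hqE⟩
  letI : SeminormedAddCommGroup (↥Xs →L[ℝ] ZeroAtInftyContinuousMap κ ℝ) := ContinuousLinearMap.toSeminormedAddCommGroup (𝕜 := ℝ) (𝕜₂ := ℝ) (E := ↥Xs) (F := ZeroAtInftyContinuousMap κ ℝ) (σ₁₂ := RingHom.id ℝ)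
  letI : SeminormedAddCommGroup (ZeroAtInftyContinuousMap ι₁ ℝ →L[ℝ] ↥Xs) := ContinuousLinearMap.toSeminormedAddCommGroup (𝕜 := ℝ) (𝕜₂ := ℝ) (E := ZeroAtInftyContinuousMap ι₁ ℝ) (F := ↥Xs) (σ₁₂ := RingHom.id ℝ)
  have hne : Nonempty ι₁ := Cardinal.mk_ne_zero_iff.mp (by
    rw [hι₁]
    exact ne_of_gt (lt_trans Cardinal.aleph0_pos Cardinal.aleph0_lt_aleph_one))
  -- norm of unit vectors
  have hnorm_single : ∀ ξ : ι₁, (1 : ℝ) ≤ ‖c0single ι₁ ξ‖ := by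
    intro ξ
    have := c0_apply_le_norm (c0single ι₁ ξ) ξ
    simpa [c0single_apply] using this
  have hkey : ∀ ξ : ι₁, c ≤ ‖j (c0single ι₁ ξ)‖ := by
    intro ξ
    calc c = c * 1 := by ring
    _ ≤ c * ‖c0single ι₁ ξ‖ := by
        exact mul_le_mul_of_nonneg_left (hnorm_single ξ) (le_of_lt hc)
    _ ≤ ‖j (c0single ι₁ ξ)‖ := hjc _
  have hjq : ∀ g : ZeroAtInftyContinuousMap ι₁ ℝ, j g = q (E g) := by
    intro g; rw [← hqE]; rfl
  have hq_bound : ∀ ξ : ι₁, c ≤ ‖q‖ * ‖E (c0single ι₁ ξ)‖ := by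
    intro ξ
    refine (hkey ξ).trans ?_
    rw [hjq]
    have := @ContinuousLinearMap.le_opNorm ℝ ℝ Xs (ZeroAtInftyContinuousMap κ ℝ) _ _ _ _ _ _ (RingHom.id ℝ) _ q (E (c0single ι₁ ξ)); exact this
  have hq_pos : 0 < ‖q‖ := by
    obtain ⟨ξ0⟩ := hne
    have h := lt_of_lt_of_le hc (hq_bound ξ0)
    rcases mul_pos_iff.mp h with ⟨h1, _⟩ | ⟨_, h2⟩
    · exact h1
    · exact absurd h2 (not_lt.mpr (norm_nonneg _))
  set r : ℝ := c / (2 * ‖q‖) with hr_def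
  have hr : 0 < r := div_pos hc (by positivity)
  -- each E eξ has a point of ω where it is large
  have hsel : ∀ ξ : ι₁, ∃ n : ℕ, r < |((E (c0single ι₁ ξ) : C(L, ℝ))) (d n)| := by
    intro ξ
    have hEnorm : r < ‖(E (c0single ι₁ ξ) : C(L, ℝ))‖ := by
      have h1 : c ≤ ‖q‖ * ‖E (c0single ι₁ ξ)‖ := hq_bound ξ
      have h2 : c / ‖q‖ ≤ ‖E (c0single ι₁ ξ)‖ := (div_le_iff₀' hq_pos).mpr h1
      have h3 : r < c / ‖q‖ := by
        rw [hr_def]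
        rw [div_lt_div_iff₀ (by positivity) hq_pos]
        nlinarith [hq_pos]
      exact lt_of_lt_of_le h3 h2
    by_contra hcon
    push_neg at hcon
    have hx : ∃ x : L, r < |((E (c0single ι₁ ξ) : C(L, ℝ))) x| := by
      by_contra hcon2
      push_neg at hcon2
      have : ‖(E (c0single ι₁ ξ) : C(L, ℝ))‖ ≤ r :=
        ((E (c0single ι₁ ξ) : C(L, ℝ)).norm_le (le_of_lt hr)).mpr
          (fun x => by rw [Real.norm_eq_abs]; exact hcon2 x)
      exact absurd hEnorm (not_lt.mpr this)
    obtain ⟨x, hx⟩ := hx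
    have hopen : IsOpen {y : L | r < |((E (c0single ι₁ ξ) : C(L, ℝ))) y|} := by
      have hcont : Continuous fun y : L => |((E (c0single ι₁ ξ) : C(L, ℝ))) y| :=
        (map_continuous _).abs
      exact isOpen_lt continuous_const hcont
    obtain ⟨n, hn⟩ := hdense.exists_mem_open hopen ⟨x, hx⟩
    exact absurd hn (by simpa using hcon n)
  choose nn hnn using hsel
  -- pigeonhole on (n, sign)
  set val : ι₁ → ℝ := fun ξ => ((E (c0single ι₁ ξ) : C(L, ℝ))) (d (nn ξ)) with hval_def
  set F : ι₁ → ℕ × Bool := fun ξ => (nn ξ, decide (0 ≤ val ξ)) with hF_def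
  have hcard : Cardinal.mk (ℕ × Bool) < Cardinal.mk ι₁ := by
    rw [hι₁, Cardinal.mk_eq_aleph0 (ℕ × Bool)]
    exact Cardinal.aleph0_lt_aleph_one
  obtain ⟨⟨n, b⟩, hfib⟩ := @Cardinal.exists_infinite_fiber _ _ F hcard (Cardinal.infinite_iff.mpr (hι₁ ▸ Cardinal.aleph0_lt_aleph_one.le))
  obtain ⟨m, hm⟩ := exists_nat_gt (‖E‖ / r)
  have hm' : ‖E‖ < m * r := (div_lt_iff₀ hr).mp hm
  have hm1 : 1 ≤ m := by
    by_contra h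
    interval_cases m
    simp at hm'
    nlinarith [norm_nonneg E]
  obtain ⟨S, hS, hScard⟩ := (Set.infinite_coe_iff.mp hfib).exists_subset_card_eq m
  have hSne : S.Nonempty := Finset.card_pos.mp (by omega)
  -- the sign factor
  set s : ℝ := if b then 1 else -1 with hs_def
  have hterm : ∀ ξ ∈ S, r < s * val ξ := by
    intro ξ hξ
    have hξF : F ξ = (n, b) := hS hξ
    have hb : decide (0 ≤ val ξ) = b := by
      have := congrArg Prod.snd hξF; simpa [hF_def] using this
    have habs : r < |val ξ| := hnn ξ
    cases hbb : b with
    | true =>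
      have h0 : 0 ≤ val ξ := of_decide_eq_true (hb.trans hbb)
      rw [hs_def, hbb]; rw [abs_of_nonneg h0] at habs; simpa using habs
    | false =>
      have h0 : ¬ (0 ≤ val ξ) := of_decide_eq_false (hb.trans hbb)
      push_neg at h0
      rw [hs_def, hbb]; rw [abs_of_neg h0] at habs; simpa using habs
  have hnnn : ∀ ξ ∈ S, nn ξ = n := by
    intro ξ hξ
    have := congrArg Prod.fst (hS hξ); simpa [hF_def] using this
  -- the test vector g
  set g : ZeroAtInftyContinuousMap ι₁ ℝ := ∑ ξ ∈ S, c0single ι₁ ξ with hg_def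
  have hgnorm : ‖g‖ ≤ 1 := by
    rw [← ZeroAtInftyContinuousMap.norm_toBCF_eq_norm]
    refine (BoundedContinuousFunction.norm_le zero_le_one).mpr (fun η => ?_)
    have : g.toBCF η = g η := rfl
    rw [this, hg_def, c0_sum_apply]
    simp only [c0single_apply]
    rw [Finset.sum_congr rfl (fun ξ _ => by rw [show ((if η = ξ then (1:ℝ) else 0) = if ξ = η then (1:ℝ) else 0) from by simp [eq_comm]])]
    rw [show (∑ ξ ∈ S, if ξ = η then (1:ℝ) else 0) = if η ∈ S then 1 else 0 from by
      simp [Finset.sum_ite_eq']]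
    split <;> simp
  -- evaluate E g at d n
  have hEg : ((E g : C(L, ℝ))) (d n) = ∑ ξ ∈ S, val ξ := by
    rw [hg_def, map_sum, Submodule.coe_sum, ContinuousMap.coe_sum, Finset.sum_apply]
    exact Finset.sum_congr rfl (fun ξ hξ => by simp only [hval_def]; rw [hnnn ξ hξ])
  have hbig : (m : ℝ) * r < s * ((E g : C(L, ℝ))) (d n) := by
    rw [hEg, Finset.mul_sum]
    calc (m : ℝ) * r = ∑ _ξ ∈ S, r := by rw [Finset.sum_const, hScard, nsmul_eq_mul]
    _ < ∑ ξ ∈ S, s * val ξ := Finset.sum_lt_sum_of_nonempty hSne hterm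
  have hsmall : s * ((E g : C(L, ℝ))) (d n) ≤ ‖E‖ := by
    have h1 : s * ((E g : C(L, ℝ))) (d n) ≤ |((E g : C(L, ℝ))) (d n)| := by
      rw [hs_def]; split
      · simpa using le_abs_self _
      · rw [neg_one_mul]; exact neg_le_abs _
    have h2 : |((E g : C(L, ℝ))) (d n)| ≤ ‖(E g : C(L, ℝ))‖ := by
      rw [← Real.norm_eq_abs]; exact (E g : C(L, ℝ)).norm_coe_le_norm (d n)
    have h3 : ‖(E g : C(L, ℝ))‖ = ‖E g‖ := rfl
    have h4 : ‖E g‖ ≤ ‖E‖ * ‖g‖ := by have := @ContinuousLinearMap.le_opNorm ℝ ℝ (ZeroAtInftyContinuousMap ι₁ ℝ) Xs _ _ _ _ _ _ (RingHom.id ℝ) _ E g; exact this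
    have h5 : ‖E‖ * ‖g‖ ≤ ‖E‖ := by
      nlinarith [norm_nonneg E, norm_nonneg g]
    linarith
  linarith
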